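/- Let F be a finite field with q elements, and let G be the semidirect product of the additive group of F by the multiplicative group Fˣ of units of F, where Fˣ acts on the additive group of F by multiplication. Then G has order q(q−1) and there exists a finite-dimensional simple module over the complex group algebra ℂ[G] of dimension q − 1. -/

import Mathlib

open FDRep CategoryTheory

/-- The natural monoid homomorphism from additive automorphisms of `A` to
multiplicative automorphisms of `Multiplicative A`. -/
def addAutToMulAut (A : Type) [AddGroup A] : Multiplicative (AddAut A) →* MulAut (Multiplicative A) where
  toFun f := AddEquiv.toMultiplicative (Multiplicative.toAdd f)
  map_one' := rfl
  map_mul' _ _ := rfl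

/-- The action of the unit group of a field `F` on its additive group by
multiplication, as a homomorphism into the automorphism group. -/
def unitsMulAction (F : Type) [Field F] : Fˣ →* MulAut (Multiplicative F) :=
  (addAutToMulAut F).comp (DistribMulAction.toAddAut Fˣ F)

open Multiplicative

noncomputable section aux19

variable (F : Type) [Field F] [Fintype F]

omit [Fintype F] in
lemma aux19_toAdd (u : Fˣ) (x : Multiplicative F) :
    toAdd ((unitsMulAction F) u x) = (u : F) * toAdd x := rfl

/-- The `(q-1)`-dimensional representation of `F ⋊ Fˣ`. -/
def myRho (ψ : AddChar F ℂ) :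
    Representation ℂ (Multiplicative F ⋊[unitsMulAction F] Fˣ) (Fˣ → ℂ) where
  toFun g :=
    { toFun := fun f b => ψ (-((b : F) * toAdd g.left)) * f (b * g.right)
      map_add' := fun f₁ f₂ => by funext b; simp [mul_add]
      map_smul' := fun c f => by funext b; simp [Pi.smul_apply, smul_eq_mul]; ring }
  map_one' := by
    ext f b
    simp
  map_mul' g g' := by
    ext f b
    simp only [LinearMap.coe_mk, AddHom.coe_mk, Module.End.mul_apply,
      SemidirectProduct.mul_left, SemidirectProduct.mul_right, toAdd_mul, aux19_toAdd,
      Units.val_mul]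
    rw [show -((b : F) * (toAdd g.left + (g.right : F) * toAdd g'.left)) =
        -((b : F) * toAdd g.left) + -(((b : F) * (g.right : F)) * toAdd g'.left) by ring,
      ψ.map_add_eq_mul, mul_assoc]
    rw [mul_assoc b g.right g'.right]

omit [Fintype F] in
lemma myRho_apply (ψ : AddChar F ℂ) (g : Multiplicative F ⋊[unitsMulAction F] Fˣ)
    (f : Fˣ → ℂ) (b : Fˣ) :
    myRho F ψ g f b = ψ (-((b : F) * toAdd g.left)) * f (b * g.right) := rfl

open Classical in
/-- delta function at `b`. -/
def aux19e (b : Fˣ) : Fˣ → ℂ := fun c => if c = b then 1 else 0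

lemma aux19_single_mem (ψ : AddChar F ℂ) (hψ : ψ ≠ 1)
    (N : Submodule ℂ (Fˣ → ℂ))
    (hN : ∀ g f, f ∈ N → myRho F ψ g f ∈ N)
    (f : Fˣ → ℂ) (hfN : f ∈ N) (a : Fˣ) (ha : f a ≠ 0) (b : Fˣ) :
    aux19e F b ∈ N := by
  classical
  set P : Fˣ → ℂ := ∑ x : F, ψ ((a : F) * x) • myRho F ψ ⟨ofAdd x, 1⟩ f with hP
  have hPN : P ∈ N := Submodule.sum_mem _ fun x _ =>
    Submodule.smul_mem _ _ (hN _ _ hfN)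
  have hPeq : P = ((Fintype.card F : ℂ) * f a) • aux19e F a := by
    funext c
    have hc : P c = ∑ x : F, ψ (((a : F) - (c : F)) * x) * f c := by
      rw [hP]
      simp only [Finset.sum_apply, Pi.smul_apply, smul_eq_mul, myRho_apply]
      refine Finset.sum_congr rfl fun x _ => ?_
      rw [show (c * (⟨ofAdd x, 1⟩ : Multiplicative F ⋊[unitsMulAction F] Fˣ).right) = c by
        simp, show toAdd (⟨ofAdd x, 1⟩ : Multiplicative F ⋊[unitsMulAction F] Fˣ).left = x
        from rfl]
      rw [show ((a : F) - (c : F)) * x = (a : F) * x + -((c : F) * x) by ring,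
        ψ.map_add_eq_mul, mul_assoc]
    rw [hc, ← Finset.sum_mul]
    by_cases hac : c = a
    · subst hac
      simp only [sub_self, zero_mul, AddChar.map_zero_eq_one]
      simp [aux19e, Finset.card_univ, mul_comm]
    · have hsub : (a : F) - (c : F) ≠ 0 := by
        rw [sub_ne_zero]
        exact fun h => hac (Units.ext h.symm)
      have hms : ψ.mulShift ((a : F) - (c : F)) ≠ 0 := by
        rw [← AddChar.one_eq_zero]
        exact AddChar.IsPrimitive.of_ne_one hψ hsub
      have hz : ∑ x : F, ψ (((a : F) - (c : F)) * x) = 0 := by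
        have := AddChar.sum_eq_zero_iff_ne_zero.2 hms
        simpa [AddChar.mulShift_apply] using this
      rw [hz, zero_mul]
      simp [aux19e, hac]
  have hcard : ((Fintype.card F : ℂ) * f a) ≠ 0 :=
    mul_ne_zero (Nat.cast_ne_zero.2 Fintype.card_ne_zero) ha
  have hsingleA : aux19e F a ∈ N := by
    have := Submodule.smul_mem N ((Fintype.card F : ℂ) * f a)⁻¹ hPN
    rwa [hPeq, smul_smul, inv_mul_cancel₀ hcard, one_smul] at this
  have hmove : myRho F ψ ⟨1, b⁻¹ * a⟩ (aux19e F a) = aux19e F b := by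
    funext c
    rw [myRho_apply]
    have h1 : toAdd ((⟨1, b⁻¹ * a⟩ : Multiplicative F ⋊[unitsMulAction F] Fˣ).left) =
        (0 : F) := rfl
    rw [h1]
    simp only [mul_zero, neg_zero, AddChar.map_zero_eq_one, one_mul]
    have hcond : (c * (b⁻¹ * a) = a) ↔ (c = b) := by
      rw [← mul_assoc, mul_eq_right, mul_inv_eq_one]
    unfold aux19e
    simp only [hcond]
  rw [← hmove]
  exact hN _ _ hsingleA

lemma aux19_key (ψ : AddChar F ℂ) (hψ : ψ ≠ 1)
    (N : Submodule ℂ (Fˣ → ℂ))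
    (hN : ∀ g f, f ∈ N → myRho F ψ g f ∈ N) (hne : N ≠ ⊥) : N = ⊤ := by
  classical
  obtain ⟨f, hfN, hf0⟩ := (Submodule.ne_bot_iff N).1 hne
  obtain ⟨a, ha⟩ := Function.ne_iff.1 hf0
  refine eq_top_iff.2 fun g _ => ?_
  have hsingle : ∀ b : Fˣ, aux19e F b ∈ N :=
    aux19_single_mem F ψ hψ N hN f hfN a ha
  have hrep : g = ∑ b : Fˣ, g b • aux19e F b := by
    funext c
    simp only [Finset.sum_apply, Pi.smul_apply, aux19e, smul_eq_mul, mul_ite, mul_one, mul_zero]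
    rw [Finset.sum_ite_eq Finset.univ c g]
    simp
  rw [hrep]
  exact Submodule.sum_mem _ fun b _ => Submodule.smul_mem _ _ (hsingle b)

end aux19

theorem stmt_19 (F : Type) [Field F] [Fintype F] (q : ℕ) (hq : Fintype.card F = q) :
    Nat.card (Multiplicative F ⋊[unitsMulAction F] Fˣ) = q * (q - 1) ∧
    ∃ V : FDRep ℂ (Multiplicative F ⋊[unitsMulAction F] Fˣ),
      Simple V ∧ Module.finrank ℂ V = q - 1 := by
  classical
  constructor
  · have e : (Multiplicative F ⋊[unitsMulAction F] Fˣ) ≃ (Multiplicative F × Fˣ) :=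
      { toFun := fun g => (g.left, g.right)
        invFun := fun p => ⟨p.1, p.2⟩
        left_inv := fun g => by cases g; rfl
        right_inv := fun p => rfl }
    rw [Nat.card_congr e, Nat.card_prod, Nat.card_congr Multiplicative.toAdd,
      Nat.card_eq_fintype_card, Nat.card_eq_fintype_card, Fintype.card_units, hq]
  · obtain ⟨ψ, hψ1⟩ := (AddChar.exists_apply_ne_zero (α := F) (a := 1)).2 one_ne_zero
    have hψ : ψ ≠ 1 := fun h => hψ1 (by rw [h]; rfl)
    refine ⟨FDRep.of (myRho F ψ), ?_, ?_⟩
    · constructor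
      intro Y f hfmono
      haveI := hfmono
      constructor
      · intro hiso hf0
        have h1 : (𝟙 (FDRep.of (myRho F ψ))) = (0 : FDRep.of (myRho F ψ) ⟶ FDRep.of (myRho F ψ)) :=
          (IsIso.inv_hom_id f).symm.trans
            ((congrArg (fun g => CategoryTheory.inv f ≫ g) hf0).trans Limits.comp_zero)
        have h2 := congrArg Action.Hom.hom h1
        rw [Action.id_hom, Action.zero_hom] at h2
        have h3 : aux19e F 1 = 0 := by
          have h4 := LinearMap.congr_fun (congrArg (fun h => h.hom.hom) h2) (aux19e F 1)
          simpa using h4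
        have h5 := congrFun h3 1
        simp [aux19e] at h5
      · intro hf0
        haveI hm1 : Mono ((Action.forget (FGModuleCat ℂ)
            (MonCat.of (Multiplicative F ⋊[unitsMulAction F] Fˣ))).map f) :=
          Functor.map_mono _ f
        haveI hm2 : Mono f.hom := hm1
        haveI hm3 : Mono ((forget₂ (FGModuleCat ℂ) (ModuleCat ℂ)).map f.hom) :=
          Functor.map_mono _ f.hom
        have hinj : Function.Injective f.hom.hom.hom :=
          (ModuleCat.mono_iff_injective
            ((forget₂ (FGModuleCat ℂ) (ModuleCat ℂ)).map f.hom)).1 hm3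
        have hN : ∀ g v, v ∈ LinearMap.range f.hom.hom.hom → myRho F ψ g v ∈ LinearMap.range f.hom.hom.hom := by
          intro g v hv
          obtain ⟨y, rfl⟩ := hv
          refine ⟨Y.ρ g y, ?_⟩
          have h7 : f.hom.hom.hom (Y.ρ g y) = (FDRep.of (myRho F ψ)).ρ g (f.hom.hom.hom y) :=
            LinearMap.congr_fun (congrArg (fun h => h.hom.hom) (f.comm g)) y
          simpa using h7
        have hne : LinearMap.range f.hom.hom.hom ≠ ⊥ := by
          rw [Ne, LinearMap.range_eq_bot]
          intro h0
          exact hf0 (Action.Hom.ext (by ext x; simp [h0]))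
        have htop := aux19_key F ψ hψ (LinearMap.range f.hom.hom.hom) hN hne
        have hsurj : Function.Surjective f.hom.hom.hom := LinearMap.range_eq_top.1 htop
        let e := LinearEquiv.ofBijective f.hom.hom.hom ⟨hinj, hsurj⟩
        haveI : IsIso f.hom :=
          ⟨InducedCategory.homMk (ModuleCat.ofHom e.symm.toLinearMap),
            by ext x; exact e.symm_apply_apply x,
            by ext1; exact LinearMap.ext fun x => e.apply_symm_apply x⟩
        exact Action.isIso_of_hom_isIso f
    · show Module.finrank ℂ (Fˣ → ℂ) = q - 1
      rw [Module.finrank_pi, Fintype.card_units, hq]
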